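/- Let (G, d) be a finite metric space on n points enumerated v₁,…,v_n, and let M be the matrix with entries d(v_i, v_j)². If Q_M < 0 (Schoenberg quadratic form maximum over unit vectors with zero coordinate sum), then (G,d) embeds isometrically in ℝ^{n−1} and the image affinely spans ℝ^{n−1}; in particular it does not embed isometrically in ℝ^{n−2}. -/

import Mathlib

namespace Sch
open RealInnerProductSpace
variable {n : ℕ}

noncomputable def lsum (n : ℕ) : (Fin n → ℝ) →ₗ[ℝ] ℝ where
  toFun x := ∑ i, x i
  map_add' x y := by simp [Finset.sum_add_distrib]
  map_smul' r x := by simp [Finset.mul_sum]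

def HS (n : ℕ) : Type := LinearMap.ker (lsum n)

noncomputable instance : AddCommGroup (HS n) := inferInstanceAs (AddCommGroup (LinearMap.ker (lsum n)))
noncomputable instance : Module ℝ (HS n) := inferInstanceAs (Module ℝ (LinearMap.ker (lsum n)))
instance : FiniteDimensional ℝ (HS n) :=
  inferInstanceAs (FiniteDimensional ℝ (LinearMap.ker (lsum n)))

def vec (x : HS n) : Fin n → ℝ := (show LinearMap.ker (lsum n) from x).1
lemma vec_sum (x : HS n) : ∑ i, vec x i = 0 := (show LinearMap.ker (lsum n) from x).2
lemma vec_injective : Function.Injective (vec (n := n)) := fun _ _ h => Subtype.ext h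

noncomputable def vecL : HS n →ₗ[ℝ] (Fin n → ℝ) where
  toFun := vec
  map_add' _ _ := rfl
  map_smul' _ _ := rfl

lemma finrank_HS (hn : 1 ≤ n) : Module.finrank ℝ (HS n) = n - 1 := by
  have hsurj : Function.Surjective (lsum n) := by
    intro r
    refine ⟨fun _ => r / n, ?_⟩
    have : (lsum n) (fun _ => r / n) = ∑ _i : Fin n, r / n := rfl
    rw [this, Finset.sum_const, Finset.card_univ, Fintype.card_fin, nsmul_eq_mul]
    field_simp
  have h := LinearMap.finrank_range_add_finrank_ker (lsum n)
  rw [LinearMap.range_eq_top.2 hsurj, finrank_top, Module.finrank_self] at h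
  have hpi : Module.finrank ℝ (Fin n → ℝ) = n := by
    simp [Module.finrank_pi]
  rw [hpi] at h
  have : Module.finrank ℝ (HS n) = Module.finrank ℝ (LinearMap.ker (lsum n)) := rfl
  omega

def pvec (i0 i : Fin n) : Fin n → ℝ := Pi.single i 1 - Pi.single i0 1

noncomputable def pp (i0 i : Fin n) : HS n :=
  show LinearMap.ker (lsum n) from ⟨pvec i0 i, by
    simp only [LinearMap.mem_ker]
    show ∑ j, pvec i0 i j = 0
    simp [pvec, Pi.single_apply, Finset.sum_sub_distrib]⟩

lemma vec_pp (i0 i : Fin n) : vec (pp i0 i) = pvec i0 i := rfl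

lemma eq_sum_pp (i0 : Fin n) (x : HS n) : x = ∑ i, vec x i • pp i0 i := by
  apply vec_injective
  have hv : vec (∑ i, vec x i • pp i0 i) = ∑ i, vec x i • pvec i0 i := by
    rw [show vec (∑ i, vec x i • pp i0 i) = vecL (∑ i, vec x i • pp i0 i) from rfl,
      map_sum]
    simp [vecL, vec_pp]
    rfl
  rw [hv]
  funext a
  simp only [Finset.sum_apply, Pi.smul_apply, pvec, Pi.sub_apply, Pi.single_apply,
    smul_eq_mul, mul_sub, Finset.sum_sub_distrib]
  have h1 : (∑ i : Fin n, vec x i * if a = i then (1:ℝ) else 0) = vec x a := by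
    simp [mul_ite]
  have h2 : (∑ i : Fin n, vec x i * if a = i0 then (1:ℝ) else 0) = 0 := by
    rcases eq_or_ne a i0 with rfl | h
    · simp [vec_sum]
    · simp [h]
  rw [h1, h2, sub_zero]


noncomputable def form (D : Fin n → Fin n → ℝ) (x y : Fin n → ℝ) : ℝ :=
  -(1/2) * ∑ i, ∑ j, D i j * x i * y j

noncomputable def qform (D : Fin n → Fin n → ℝ) (x : Fin n → ℝ) : ℝ :=
  ∑ i, ∑ j, if i < j then D i j * x i * x j else 0

lemma form_eq_neg_qform (D : Fin n → Fin n → ℝ) (hsym : ∀ i j, D j i = D i j)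
    (hdiag : ∀ i, D i i = 0) (x : Fin n → ℝ) : form D x x = - qform D x := by
  have key : ∀ i j : Fin n, D i j * x i * x j =
      (if i < j then D i j * x i * x j else 0) +
      (if j < i then D i j * x i * x j else 0) +
      (if i = j then D i j * x i * x j else 0) := by
    intro i j
    rcases lt_trichotomy i j with h | h | h
    · simp [h, h.ne, (not_lt.2 h.le : ¬ j < i)]
    · simp [h, lt_irrefl]
    · simp [h, h.ne', (not_lt.2 h.le : ¬ i < j)]
  have h1 : ∑ i, ∑ j, D i j * x i * x j =
      qform D x + (∑ i, ∑ j, if j < i then D i j * x i * x j else 0) +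
      (∑ i, ∑ j, if i = j then D i j * x i * x j else 0) := by
    rw [qform, ← Finset.sum_add_distrib, ← Finset.sum_add_distrib]
    congr 1; ext i
    rw [← Finset.sum_add_distrib, ← Finset.sum_add_distrib]
    congr 1; ext j; exact key i j
  have h2 : (∑ i, ∑ j, if j < i then D i j * x i * x j else 0) = qform D x := by
    rw [Finset.sum_comm, qform]
    congr 1; ext i; congr 1; ext j
    rcases lt_or_ge i j with h | h
    · simp [h, hsym i j]; ring
    · simp [not_lt.2 h]
  have h3 : (∑ i, ∑ j, if i = j then D i j * x i * x j else 0) = 0 := by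
    apply Finset.sum_eq_zero; intro i _
    rw [Finset.sum_ite_eq _ i (fun j => D i j * x i * x j)]
    simp [hdiag]
  rw [form, h1, h2, h3]; ring


def S (n : ℕ) (D : Fin n → Fin n → ℝ) : Set ℝ :=
  {q : ℝ | ∃ x : Fin n → ℝ, ∑ k, x k ^ 2 = 1 ∧ ∑ k, x k = 0 ∧ q = qform D x}

lemma qform_smul (D : Fin n → Fin n → ℝ) (c : ℝ) (x : Fin n → ℝ) :
    qform D (c • x) = c ^ 2 * qform D x := by
  rw [qform, qform, Finset.mul_sum]
  congr 1; ext i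
  rw [Finset.mul_sum]
  congr 1; ext j
  rcases lt_or_ge i j with h | h
  · simp [h]; ring
  · simp [not_lt.2 h]

lemma hneg_of_sSup (D : Fin n → Fin n → ℝ) (hQ : sSup (S n D) < 0) :
    ∀ x : Fin n → ℝ, ∑ i, x i = 0 → x ≠ 0 → qform D x < 0 := by
  have hbdd : BddAbove (S n D) := by
    by_contra h
    rw [Real.sSup_of_not_bddAbove h] at hQ
    exact lt_irrefl _ hQ
  intro x hsum hx
  have hpos : 0 < ∑ i, x i ^ 2 := by
    obtain ⟨i, hi⟩ := Function.ne_iff.1 hx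
    have hi' : x i ≠ 0 := by simpa using hi
    refine Finset.sum_pos' (fun j _ => sq_nonneg _) ⟨i, Finset.mem_univ i, ?_⟩
    positivity
  set c : ℝ := Real.sqrt (∑ i, x i ^ 2) with hc
  have hcpos : 0 < c := Real.sqrt_pos.2 hpos
  have hc2 : c ^ 2 = ∑ i, x i ^ 2 := Real.sq_sqrt hpos.le
  have hmem : qform D (c⁻¹ • x) ∈ S n D := by
    refine ⟨c⁻¹ • x, ?_, ?_, rfl⟩
    · have : ∑ k, (c⁻¹ • x) k ^ 2 = c⁻¹ ^ 2 * ∑ k, x k ^ 2 := by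
        rw [Finset.mul_sum]; congr 1; ext k; simp [mul_pow]
      rw [this, ← hc2]
      field_simp
    · simp [Finset.smul_sum.symm, ← Finset.mul_sum, hsum]
  have hle : qform D (c⁻¹ • x) ≤ sSup (S n D) := le_csSup hbdd hmem
  have hq : qform D (c⁻¹ • x) = c⁻¹ ^ 2 * qform D x := qform_smul D c⁻¹ x
  have : c⁻¹ ^ 2 * qform D x < 0 := lt_of_le_of_lt (hq ▸ hle) hQ
  nlinarith [sq_nonneg c⁻¹, this]

lemma two_le_of_sSup (D : Fin n → Fin n → ℝ) (hQ : sSup (S n D) < 0) : 2 ≤ n := by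
  by_contra h
  push_neg at h
  have hne : (S n D).Nonempty := by
    by_contra he
    rw [Set.not_nonempty_iff_eq_empty] at he
    rw [he, Real.sSup_empty] at hQ
    exact lt_irrefl _ hQ
  obtain ⟨q, x, h1, h2, _⟩ := hne
  interval_cases n
  · simp at h1
  · rw [Fin.sum_univ_one] at h1 h2
    rw [h2] at h1; norm_num at h1

lemma sum_single_mul (f : Fin n → Fin n → ℝ) (i j : Fin n) :
    ∑ a, ∑ b, f a b * Pi.single (M := fun _ => ℝ) i 1 a * Pi.single (M := fun _ => ℝ) j 1 b
      = f i j := by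
  simp only [Pi.single_apply, mul_ite, mul_one, mul_zero, ite_mul, zero_mul]
  rw [Finset.sum_comm]
  have h1 : ∀ y : Fin n, (∑ x : Fin n, if y = j then if x = i then f x y else 0 else 0)
      = if y = j then f i y else 0 := by
    intro y
    rcases eq_or_ne y j with rfl | h
    · simp
    · simp [h]
  simp only [h1]
  simp

lemma form_single (D : Fin n → Fin n → ℝ) (hsym : ∀ i j, D j i = D i j)
    (hdiag : ∀ i, D i i = 0) (i j : Fin n) :
    form D (Pi.single (M := fun _ => ℝ) i 1 - Pi.single (M := fun _ => ℝ) j 1) (Pi.single (M := fun _ => ℝ) i 1 - Pi.single (M := fun _ => ℝ) j 1) = D i j := by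
  have expand : ∀ a b : Fin n,
      D a b * (Pi.single (M := fun _ => ℝ) i 1 - Pi.single (M := fun _ => ℝ) j 1) a * (Pi.single (M := fun _ => ℝ) i 1 - Pi.single (M := fun _ => ℝ) j 1) b
      = D a b * Pi.single (M := fun _ => ℝ) i 1 a * Pi.single (M := fun _ => ℝ) i 1 b
        - D a b * Pi.single (M := fun _ => ℝ) i 1 a * Pi.single (M := fun _ => ℝ) j 1 b
        - D a b * Pi.single (M := fun _ => ℝ) j 1 a * Pi.single (M := fun _ => ℝ) i 1 b
        + D a b * Pi.single (M := fun _ => ℝ) j 1 a * Pi.single (M := fun _ => ℝ) j 1 b := by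
    intro a b; simp only [Pi.sub_apply]; ring
  have hsum : (∑ a, ∑ b, D a b * (Pi.single (M := fun _ => ℝ) i 1 - Pi.single (M := fun _ => ℝ) j 1) a *
      (Pi.single (M := fun _ => ℝ) i 1 - Pi.single (M := fun _ => ℝ) j 1) b) = D i i - D i j - D j i + D j j := by
    rw [← sum_single_mul D i i, ← sum_single_mul D i j, ← sum_single_mul D j i,
      ← sum_single_mul D j j]
    rw [← Finset.sum_sub_distrib, ← Finset.sum_sub_distrib, ← Finset.sum_add_distrib]
    congr 1; ext a
    rw [← Finset.sum_sub_distrib, ← Finset.sum_sub_distrib, ← Finset.sum_add_distrib]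
    congr 1; ext b
    exact expand a b
  rw [form, hsum, hdiag, hdiag, hsym i j]
  ring

lemma form_symm (D : Fin n → Fin n → ℝ) (hsym : ∀ i j, D j i = D i j) (x y : Fin n → ℝ) :
    form D x y = form D y x := by
  rw [form, form, Finset.sum_comm]
  congr 1
  refine Finset.sum_congr rfl fun i _ => Finset.sum_congr rfl fun j _ => ?_
  rw [hsym]; ring

lemma form_add_left (D : Fin n → Fin n → ℝ) (x y z : Fin n → ℝ) :
    form D (x + y) z = form D x z + form D y z := by
  have h : (∑ i, ∑ j, D i j * (x + y) i * z j)
      = (∑ i, ∑ j, D i j * x i * z j) + (∑ i, ∑ j, D i j * y i * z j) := by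
    rw [← Finset.sum_add_distrib]; congr 1; ext i
    rw [← Finset.sum_add_distrib]; congr 1; ext j
    simp only [Pi.add_apply]; ring
  simp only [form, h]; ring

lemma form_smul_left (D : Fin n → Fin n → ℝ) (r : ℝ) (x z : Fin n → ℝ) :
    form D (r • x) z = r * form D x z := by
  have h : (∑ i, ∑ j, D i j * (r • x) i * z j) = r * ∑ i, ∑ j, D i j * x i * z j := by
    rw [Finset.mul_sum]; congr 1; ext i
    rw [Finset.mul_sum]; congr 1; ext j
    simp only [Pi.smul_apply, smul_eq_mul]; ring
  simp only [form, h]; ring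

lemma form_pos (D : Fin n → Fin n → ℝ) (hsym : ∀ i j, D j i = D i j)
    (hdiag : ∀ i, D i i = 0)
    (hneg : ∀ x : Fin n → ℝ, ∑ i, x i = 0 → x ≠ 0 → qform D x < 0)
    (x : HS n) (hx : x ≠ 0) : 0 < form D (vec x) (vec x) := by
  rw [form_eq_neg_qform D hsym hdiag]
  have : vec x ≠ 0 := fun h => hx (vec_injective (h.trans rfl))
  linarith [hneg (vec x) (vec_sum x) this]

noncomputable def core (D : Fin n → Fin n → ℝ) (hsym : ∀ i j, D j i = D i j)
    (hdiag : ∀ i, D i i = 0)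
    (hneg : ∀ x : Fin n → ℝ, ∑ i, x i = 0 → x ≠ 0 → qform D x < 0) :
    InnerProductSpace.Core ℝ (HS n) where
  inner x y := form D (vec x) (vec y)
  conj_inner_symm x y := by
    simp only [conj_trivial]
    exact form_symm D hsym (vec y) (vec x)
  re_inner_nonneg x := by
    rcases eq_or_ne x 0 with rfl | hx
    · show (0:ℝ) ≤ form D (vec 0) (vec 0)
      have : vec (0 : HS n) = 0 := rfl
      rw [this, form]
      simp
    · exact (form_pos D hsym hdiag hneg x hx).le
  add_left x y z := form_add_left D (vec x) (vec y) (vec z)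
  smul_left x y r := by
    simp only [conj_trivial]
    exact form_smul_left D r (vec x) (vec y)
  definite x hx := by
    by_contra h
    exact absurd hx (ne_of_gt (form_pos D hsym hdiag hneg x h))

lemma bdd_of_sSup (D : Fin n → Fin n → ℝ) (hQ : sSup (S n D) < 0) : BddAbove (S n D) := by
  by_contra h
  rw [Real.sSup_of_not_bddAbove h] at hQ
  exact lt_irrefl _ hQ

lemma sum_normsq_zero {E : Type*} [NormedAddCommGroup E] [InnerProductSpace ℝ E]
    (y : Fin n → E) (x : Fin n → ℝ) (hx : ∑ i, x i = 0) (hxy : ∑ i, x i • y i = 0) :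
    ∑ i, ∑ j, ‖y i - y j‖ ^ 2 * x i * x j = 0 := by
  have h1 : ∑ i, ∑ j, ‖y i - y j‖ ^ 2 * x i * x j
      = (∑ i, ∑ j, (‖y i‖ ^ 2 * x i) * x j) + (∑ i, ∑ j, x i * (‖y j‖ ^ 2 * x j))
        - ∑ i, ∑ j, 2 * ⟪x i • y i, x j • y j⟫ := by
    rw [← Finset.sum_add_distrib, ← Finset.sum_sub_distrib]
    refine Finset.sum_congr rfl fun i _ => ?_
    rw [← Finset.sum_add_distrib, ← Finset.sum_sub_distrib]
    refine Finset.sum_congr rfl fun j _ => ?_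
    rw [@norm_sub_sq_real, real_inner_smul_left, real_inner_smul_right]
    ring
  have h2 : (∑ i, ∑ j, (‖y i‖ ^ 2 * x i) * x j) = 0 := by
    refine Finset.sum_eq_zero fun i _ => ?_
    rw [← Finset.mul_sum, hx, mul_zero]
  have h3 : (∑ i, ∑ j, x i * (‖y j‖ ^ 2 * x j)) = 0 := by
    have e1 : ∀ i, (∑ j, x i * (‖y j‖ ^ 2 * x j)) = x i * ∑ j, ‖y j‖ ^ 2 * x j :=
      fun i => (Finset.mul_sum _ _ _).symm
    simp only [e1]
    rw [← Finset.sum_mul, hx, zero_mul]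
  have h4 : (∑ i, ∑ j, 2 * ⟪x i • y i, x j • y j⟫) = 0 := by
    have e2 : ∀ i, (∑ j, 2 * ⟪x i • y i, x j • y j⟫) = 2 * ⟪x i • y i, ∑ j, x j • y j⟫ := by
      intro i; rw [inner_sum, Finset.mul_sum]
    simp only [e2, hxy, inner_zero_right, mul_zero, Finset.sum_const, smul_zero]
  rw [h1, h2, h3, h4]
  ring

end Sch

noncomputable def Q (n : ℕ) (M : Fin n → Fin n → ℝ) : ℝ :=
  sSup {q : ℝ | ∃ x : Fin n → ℝ, ∑ k, x k ^ 2 = 1 ∧ ∑ k, x k = 0 ∧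
    q = ∑ i, ∑ j, if i < j then M i j * x i * x j else 0}

open RealInnerProductSpace

theorem stmt_15 (n : ℕ) (G : Type*) [MetricSpace G] (v : Fin n ≃ G)
    (hQ : Q n (fun i j => dist (v i) (v j) ^ 2) < 0) :
    (∃ f : G → EuclideanSpace ℝ (Fin (n - 1)),
        (∀ x y : G, dist (f x) (f y) = dist x y) ∧
        affineSpan ℝ (Set.range f) = ⊤) ∧
    ¬∃ g : G → EuclideanSpace ℝ (Fin (n - 2)),
        ∀ x y : G, dist (g x) (g y) = dist x y := by
  classical
  set D : Fin n → Fin n → ℝ := fun i j => dist (v i) (v j) ^ 2 with hD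
  have hQ' : sSup (Sch.S n D) < 0 := hQ
  have hsym : ∀ i j, D j i = D i j := fun i j => by simp [hD, dist_comm]
  have hdiag : ∀ i, D i i = 0 := fun i => by simp [hD]
  have hneg := Sch.hneg_of_sSup D hQ'
  have hbdd := Sch.bdd_of_sSup D hQ'
  have hn : 2 ≤ n := Sch.two_le_of_sSup D hQ'
  letI cc : InnerProductSpace.Core ℝ (Sch.HS n) := Sch.core D hsym hdiag hneg
  letI : NormedAddCommGroup (Sch.HS n) := cc.toNormedAddCommGroup
  letI : InnerProductSpace ℝ (Sch.HS n) := InnerProductSpace.ofCore cc.toCore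
  have hrank : Module.finrank ℝ (Sch.HS n) = n - 1 := Sch.finrank_HS (by omega)
  let B := (stdOrthonormalBasis ℝ (Sch.HS n)).reindex (finCongr hrank)
  let E := B.repr
  let i0 : Fin n := ⟨0, by omega⟩
  let f : G → EuclideanSpace ℝ (Fin (n - 1)) := fun g => E (Sch.pp i0 (v.symm g))
  have hinner : ∀ a b : Sch.HS n, ⟪a, b⟫ = Sch.form D (Sch.vec a) (Sch.vec b) :=
    fun a b => rfl
  constructor
  · refine ⟨f, ?_, ?_⟩
    · intro x y
      have h1 : dist (f x) (f y) = dist (Sch.pp i0 (v.symm x)) (Sch.pp i0 (v.symm y)) :=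
        E.dist_map _ _
      rw [h1, dist_eq_norm]
      have h3 : ‖Sch.pp i0 (v.symm x) - Sch.pp i0 (v.symm y)‖ ^ 2 = D (v.symm x) (v.symm y) := by
        rw [← real_inner_self_eq_norm_sq, hinner]
        have hv : Sch.vec (Sch.pp i0 (v.symm x) - Sch.pp i0 (v.symm y))
            = Pi.single (M := fun _ => ℝ) (v.symm x) 1
              - Pi.single (M := fun _ => ℝ) (v.symm y) 1 := by
          show Sch.pvec i0 (v.symm x) - Sch.pvec i0 (v.symm y) = _
          rw [Sch.pvec, Sch.pvec, sub_sub_sub_cancel_right]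
        rw [hv]
        exact Sch.form_single D hsym hdiag _ _
      have h4 : D (v.symm x) (v.symm y) = dist x y ^ 2 := by simp [hD]
      have h := congrArg Real.sqrt (h3.trans h4)
      rwa [Real.sqrt_sq (norm_nonneg _), Real.sqrt_sq dist_nonneg] at h
    · have hpp0 : Sch.pp i0 i0 = 0 := by
        apply Sch.vec_injective
        show Sch.pvec i0 i0 = Sch.vec 0
        rw [Sch.pvec, sub_self]
        rfl
      have hspan : Submodule.span ℝ (Set.range (Sch.pp (n := n) i0)) = ⊤ := by
        rw [eq_top_iff]
        rintro z -
        rw [Sch.eq_sum_pp i0 z]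
        exact Submodule.sum_mem _ fun i _ =>
          Submodule.smul_mem _ _ (Submodule.subset_span ⟨i, rfl⟩)
      have hrangef : Set.range f = ⇑E '' Set.range (Sch.pp (n := n) i0) := by
        have hfc : f = ⇑E ∘ (Sch.pp i0) ∘ ⇑v.symm := rfl
        rw [hfc, Set.range_comp, Function.Surjective.range_comp v.symm.surjective]
      have hspanf : Submodule.span ℝ (Set.range f) = ⊤ := by
        rw [hrangef, show ⇑E = ⇑(E.toLinearEquiv.toLinearMap) from rfl,
          ← Submodule.map_span, hspan, Submodule.map_top, LinearMap.range_eq_top]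
        exact E.surjective
      have hne : (Set.range f).Nonempty := ⟨f (v i0), ⟨v i0, rfl⟩⟩
      rw [AffineSubspace.affineSpan_eq_top_iff_vectorSpan_eq_top_of_nonempty ℝ _ _ hne]
      have hf0 : f (v i0) = 0 := by
        show E (Sch.pp i0 (v.symm (v i0))) = 0
        rw [Equiv.symm_apply_apply, hpp0, map_zero]
      rw [eq_top_iff, ← hspanf]
      refine Submodule.span_le.2 ?_
      rintro z ⟨g, rfl⟩
      have hm := vsub_mem_vectorSpan ℝ (Set.mem_range_self (f := f) g)
        (Set.mem_range_self (f := f) (v i0))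
      rwa [hf0, vsub_eq_sub, sub_zero] at hm
  · rintro ⟨g, hg⟩
    set y : Fin n → EuclideanSpace ℝ (Fin (n - 2)) := fun i => g (v i) with hy
    have hnotindep : ¬ AffineIndependent ℝ y := by
      intro hind
      have hcard := hind.card_le_finrank_succ
      have hle : Module.finrank ℝ (vectorSpan ℝ (Set.range y)) ≤ n - 2 :=
        le_trans (Submodule.finrank_le _) (by simp)
      rw [Fintype.card_fin] at hcard
      omega
    rw [affineIndependent_iff] at hnotindep
    push_neg at hnotindep
    obtain ⟨s, w, hw0, hws, e, hes, hwe⟩ := hnotindep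
    set w' : Fin n → ℝ := fun i => if i ∈ s then w i else 0 with hw'
    have hw'0 : ∑ i, w' i = 0 := by
      rw [hw']
      rw [Finset.sum_ite_mem, Finset.univ_inter, hw0]
    have hw's : ∑ i, w' i • y i = 0 := by
      have : ∀ i, w' i • y i = if i ∈ s then w i • y i else 0 := by
        intro i; by_cases h : i ∈ s <;> simp [hw', h]
      simp only [this]
      rw [Finset.sum_ite_mem, Finset.univ_inter, hws]
    have hw'ne : w' ≠ 0 := by
      intro h
      apply hwe
      have := congrFun h e
      simpa [hw', hes] using this
    have hpos : 0 < ∑ i, w' i ^ 2 := by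
      obtain ⟨i, hi⟩ := Function.ne_iff.1 hw'ne
      have hi' : w' i ≠ 0 := by simpa using hi
      refine Finset.sum_pos' (fun j _ => sq_nonneg _) ⟨i, Finset.mem_univ i, by positivity⟩
    set c : ℝ := Real.sqrt (∑ i, w' i ^ 2) with hc
    have hcpos : 0 < c := Real.sqrt_pos.2 hpos
    have hc2 : c ^ 2 = ∑ i, w' i ^ 2 := Real.sq_sqrt hpos.le
    set x : Fin n → ℝ := c⁻¹ • w' with hx
    have hx2 : ∑ k, x k ^ 2 = 1 := by
      have h : ∑ k, x k ^ 2 = c⁻¹ ^ 2 * ∑ k, w' k ^ 2 := by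
        rw [Finset.mul_sum]; refine Finset.sum_congr rfl fun k _ => ?_
        rw [hx]; simp [mul_pow]
      rw [h, ← hc2]
      field_simp
    have hx0 : ∑ k, x k = 0 := by
      rw [hx]
      simp [← Finset.mul_sum, hw'0]
    have hxy : ∑ i, x i • y i = 0 := by
      have h : ∑ i, x i • y i = c⁻¹ • ∑ i, w' i • y i := by
        rw [Finset.smul_sum]; refine Finset.sum_congr rfl fun i _ => ?_
        rw [hx]; simp [smul_smul]
      rw [h, hw's, smul_zero]
    have hDij : ∀ i j, D i j = ‖y i - y j‖ ^ 2 := by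
      intro i j
      rw [hD, hy]
      simp only []
      rw [← hg (v i) (v j), dist_eq_norm]
    have hsum0 : ∑ i, ∑ j, D i j * x i * x j = 0 := by
      have h : ∀ i j, D i j * x i * x j = ‖y i - y j‖ ^ 2 * x i * x j := by
        intro i j; rw [hDij]
      calc ∑ i, ∑ j, D i j * x i * x j
          = ∑ i, ∑ j, ‖y i - y j‖ ^ 2 * x i * x j := by
            refine Finset.sum_congr rfl fun i _ => Finset.sum_congr rfl fun j _ => h i j
        _ = 0 := Sch.sum_normsq_zero y x hx0 hxy
    have hqf : Sch.qform D x = 0 := by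
      have hf : Sch.form D x x = 0 := by
        rw [Sch.form, hsum0, mul_zero]
      have := Sch.form_eq_neg_qform D hsym hdiag x
      rw [hf] at this
      linarith
    have hmem : (0 : ℝ) ∈ Sch.S n D := ⟨x, hx2, hx0, hqf.symm⟩
    have := le_csSup hbdd hmem
    linarith
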